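/- For empirical quantile forecasts, the average score difference θ ↦ (1/n)Σᵢ [S^Q_{α,θ}(x_{i1},y_i) − S^Q_{α,θ}(x_{i2},y_i)] is a right-continuous piecewise constant function of θ, each summand vanishing unless min(x_{i1},x_{i2}) ≤ θ < max(x_{i1},x_{i2}), and with jump points only at x_{i1}, x_{i2}, or y_i. Consequently, if the average score of forecast 1 is ≤ that of forecast 2 at every θ in the finite set {x_{11},x_{12},y_1,…,x_{n1},x_{n2},y_n}, then it is ≤ at every θ ∈ ℝ. -/

import Mathlib

open Finset

/-- Elementary quantile score `S^Q_{α,θ}(x,y)`. -/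
noncomputable def SQ (α θ x y : ℝ) : ℝ :=
  ((if y < x then (1:ℝ) else 0) - α) * ((if θ < x then (1:ℝ) else 0) - (if θ < y then (1:ℝ) else 0))

lemma SQ_congr {α θ θ' x y : ℝ} (hx : θ < x ↔ θ' < x) (hy : θ < y ↔ θ' < y) :
    SQ α θ x y = SQ α θ' x y := by
  unfold SQ
  rw [if_congr hx rfl rfl, if_congr hy rfl rfl]

lemma ind_iff {θ θ' z : ℝ} (h : |θ' - θ| < |z - θ|) : (θ < z ↔ θ' < z) := by
  rw [abs_sub_lt_iff] at h
  rcases le_or_gt z θ with hz | hz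
  · rw [abs_of_nonpos (by linarith)] at h
    constructor <;> intro h' <;> linarith [h.1, h.2]
  · rw [abs_of_pos (by linarith)] at h
    constructor <;> intro h' <;> linarith [h.1, h.2]

lemma ind_iff_right {θ θ' z : ℝ} (h1 : θ ≤ θ')
    (h2 : θ < z → θ' < z) : (θ < z ↔ θ' < z) :=
  ⟨h2, fun h => lt_of_le_of_lt h1 h⟩

/-- Structure of the empirical score difference for quantile forecasts: the average score
difference is right-continuous, each summand vanishes unless
`min(x_{i1},x_{i2}) ≤ θ < max(x_{i1},x_{i2})`, the difference is locally constant away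
from the data points, and dominance need only be checked at the finitely many data
points `x_{i1}, x_{i2}, y_i`. -/
theorem stmt17 (α : ℝ) (hα : α ∈ Set.Ioo (0:ℝ) 1) (n : ℕ) (hn : 0 < n)
    (x1 x2 y : Fin n → ℝ) :
    (∀ θ : ℝ, ContinuousWithinAt
      (fun t : ℝ => (1 / (n : ℝ)) * ∑ i, (SQ α t (x1 i) (y i) - SQ α t (x2 i) (y i)))
      (Set.Ici θ) θ) ∧
    (∀ (i : Fin n) (θ : ℝ), ¬(min (x1 i) (x2 i) ≤ θ ∧ θ < max (x1 i) (x2 i)) →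
      SQ α θ (x1 i) (y i) - SQ α θ (x2 i) (y i) = 0) ∧
    (∀ θ : ℝ, (∀ i : Fin n, θ ≠ x1 i ∧ θ ≠ x2 i ∧ θ ≠ y i) →
      ∃ ε > 0, ∀ θ' ∈ Set.Ioo (θ - ε) (θ + ε),
        (1 / (n : ℝ)) * ∑ i, (SQ α θ' (x1 i) (y i) - SQ α θ' (x2 i) (y i))
          = (1 / (n : ℝ)) * ∑ i, (SQ α θ (x1 i) (y i) - SQ α θ (x2 i) (y i))) ∧
    ((∀ θ ∈ Set.range x1 ∪ Set.range x2 ∪ Set.range y,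
        (1 / (n : ℝ)) * ∑ i, SQ α θ (x1 i) (y i)
          ≤ (1 / (n : ℝ)) * ∑ i, SQ α θ (x2 i) (y i)) →
      ∀ θ : ℝ,
        (1 / (n : ℝ)) * ∑ i, SQ α θ (x1 i) (y i)
          ≤ (1 / (n : ℝ)) * ∑ i, SQ α θ (x2 i) (y i)) := by
  haveI : Nonempty (Fin n) := ⟨⟨0, hn⟩⟩
  have hne : (Finset.univ : Finset (Fin n)).Nonempty := Finset.univ_nonempty
  refine ⟨?_, ?_, ?_, ?_⟩
  · -- right-continuity
    intro θ
    set e : ℝ → ℝ := fun z => if θ < z then z - θ else 1 with he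
    have hepos : ∀ z, 0 < e z := by
      intro z; simp only [he]; split_ifs with h
      · linarith
      · norm_num
    set ε : ℝ := Finset.univ.inf' hne
      (fun i => min (e (x1 i)) (min (e (x2 i)) (e (y i)))) with hε
    have hεpos : 0 < ε := by
      rw [hε, Finset.lt_inf'_iff]
      intro i _
      exact lt_min (hepos _) (lt_min (hepos _) (hepos _))
    have hεle : ∀ i : Fin n, ε ≤ e (x1 i) ∧ ε ≤ e (x2 i) ∧ ε ≤ e (y i) := by
      intro i
      have h1 : ε ≤ min (e (x1 i)) (min (e (x2 i)) (e (y i))) := by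
        rw [hε]; exact Finset.inf'_le _ (Finset.mem_univ i)
      exact ⟨h1.trans (min_le_left _ _),
        (h1.trans (min_le_right _ _)).trans (min_le_left _ _),
        (h1.trans (min_le_right _ _)).trans (min_le_right _ _)⟩
    have key : ∀ θ' ∈ Set.Ico θ (θ + ε), ∀ z : ℝ, ε ≤ e z → (θ < z ↔ θ' < z) := by
      intro θ' hθ' z hz
      refine ind_iff_right hθ'.1 (fun h => ?_)
      have : e z = z - θ := by simp only [he, if_pos h]
      rw [this] at hz
      calc θ' < θ + ε := hθ'.2
        _ ≤ z := by linarith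
    have hconst : ∀ θ' ∈ Set.Ico θ (θ + ε),
        (fun t : ℝ => (1 / (n : ℝ)) * ∑ i, (SQ α t (x1 i) (y i) - SQ α t (x2 i) (y i))) θ'
          = (fun t : ℝ => (1 / (n : ℝ)) * ∑ i, (SQ α t (x1 i) (y i) - SQ α t (x2 i) (y i))) θ := by
      intro θ' hθ'
      simp only
      congr 1
      refine Finset.sum_congr rfl fun i _ => ?_
      obtain ⟨h1, h2, h3⟩ := hεle i
      rw [SQ_congr (key θ' hθ' _ h1) (key θ' hθ' _ h3),
        SQ_congr (key θ' hθ' _ h2) (key θ' hθ' _ h3)]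
    have hmem : Set.Ico θ (θ + ε) ∈ nhdsWithin θ (Set.Ici θ) :=
      Ico_mem_nhdsGE_of_mem ⟨le_refl θ, by linarith⟩
    exact ContinuousWithinAt.congr_of_eventuallyEq continuousWithinAt_const
      (Filter.eventually_of_mem hmem hconst) rfl
  · -- vanishing outside [min, max)
    intro i θ h
    rcases not_and_or.mp h with h | h
    · have h' : θ < min (x1 i) (x2 i) := not_le.mp h
      rw [lt_min_iff] at h'
      unfold SQ
      split_ifs <;> ring_nf <;> linarith [h'.1, h'.2]
    · have h' : max (x1 i) (x2 i) ≤ θ := not_lt.mp h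
      rw [max_le_iff] at h'
      unfold SQ
      split_ifs <;> ring_nf <;> linarith [h'.1, h'.2]
  · -- locally constant away from data points
    intro θ hθ
    set ε : ℝ := Finset.univ.inf' hne
      (fun i => min |x1 i - θ| (min |x2 i - θ| |y i - θ|)) with hε
    have hεpos : 0 < ε := by
      rw [hε, Finset.lt_inf'_iff]
      intro i _
      obtain ⟨h1, h2, h3⟩ := hθ i
      exact lt_min (abs_pos.mpr (sub_ne_zero_of_ne h1.symm))
        (lt_min (abs_pos.mpr (sub_ne_zero_of_ne h2.symm))
          (abs_pos.mpr (sub_ne_zero_of_ne h3.symm)))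
    refine ⟨ε, hεpos, fun θ' hθ' => ?_⟩
    have habs : |θ' - θ| < ε := abs_lt.mpr ⟨by linarith [hθ'.1], by linarith [hθ'.2]⟩
    have hεle : ∀ i : Fin n, ε ≤ |x1 i - θ| ∧ ε ≤ |x2 i - θ| ∧ ε ≤ |y i - θ| := by
      intro i
      have h1 : ε ≤ min |x1 i - θ| (min |x2 i - θ| |y i - θ|) := by
        rw [hε]; exact Finset.inf'_le _ (Finset.mem_univ i)
      exact ⟨h1.trans (min_le_left _ _),
        (h1.trans (min_le_right _ _)).trans (min_le_left _ _),
        (h1.trans (min_le_right _ _)).trans (min_le_right _ _)⟩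
    congr 1
    refine Finset.sum_congr rfl fun i _ => ?_
    obtain ⟨h1, h2, h3⟩ := hεle i
    rw [← SQ_congr (ind_iff (habs.trans_le h1)) (ind_iff (habs.trans_le h3)),
      ← SQ_congr (ind_iff (habs.trans_le h2)) (ind_iff (habs.trans_le h3))]
  · -- dominance at data points implies dominance everywhere
    intro hdom θ
    set T : Finset ℝ :=
      (Finset.univ.image x1) ∪ (Finset.univ.image x2) ∪ (Finset.univ.image y) with hT
    have hmemT : ∀ i : Fin n, x1 i ∈ T ∧ x2 i ∈ T ∧ y i ∈ T := by
      intro i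
      refine ⟨?_, ?_, ?_⟩ <;> simp [hT]
    by_cases hcase : (T.filter (· ≤ θ)).Nonempty
    · set z₀ : ℝ := (T.filter (· ≤ θ)).max' hcase with hz₀
      have hz₀mem : z₀ ∈ T.filter (· ≤ θ) := Finset.max'_mem _ _
      have hz₀le : z₀ ≤ θ := by
        have := Finset.mem_filter.mp hz₀mem
        simpa using this.2
      have hiff : ∀ z ∈ T, (z₀ < z ↔ θ < z) := by
        intro z hz
        constructor
        · intro h
          by_contra h'
          push_neg at h'
          have : z ∈ T.filter (· ≤ θ) := Finset.mem_filter.mpr ⟨hz, by simpa using h'⟩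
          exact absurd (Finset.le_max' _ _ this) (not_le.mpr h)
        · intro h
          exact lt_of_le_of_lt hz₀le h
      have heq : ∀ i : Fin n,
          SQ α θ (x1 i) (y i) = SQ α z₀ (x1 i) (y i)
          ∧ SQ α θ (x2 i) (y i) = SQ α z₀ (x2 i) (y i) := by
        intro i
        obtain ⟨m1, m2, m3⟩ := hmemT i
        exact ⟨(SQ_congr (hiff _ m1) (hiff _ m3)).symm,
          (SQ_congr (hiff _ m2) (hiff _ m3)).symm⟩
      have hz₀range : z₀ ∈ Set.range x1 ∪ Set.range x2 ∪ Set.range y := by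
        have hz₀T : z₀ ∈ T := (Finset.mem_filter.mp hz₀mem).1
        simp only [hT, Finset.mem_union, Finset.mem_image, Finset.mem_univ, true_and] at hz₀T
        rcases hz₀T with (⟨i, hi⟩ | ⟨i, hi⟩) | ⟨i, hi⟩
        · exact Or.inl (Or.inl ⟨i, hi⟩)
        · exact Or.inl (Or.inr ⟨i, hi⟩)
        · exact Or.inr ⟨i, hi⟩
      calc (1 / (n : ℝ)) * ∑ i, SQ α θ (x1 i) (y i)
          = (1 / (n : ℝ)) * ∑ i, SQ α z₀ (x1 i) (y i) := by
            congr 1; exact Finset.sum_congr rfl fun i _ => (heq i).1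
        _ ≤ (1 / (n : ℝ)) * ∑ i, SQ α z₀ (x2 i) (y i) := hdom z₀ hz₀range
        _ = (1 / (n : ℝ)) * ∑ i, SQ α θ (x2 i) (y i) := by
            congr 1; exact Finset.sum_congr rfl fun i _ => ((heq i).2).symm
    · -- θ below all data points: every score is zero
      have hall : ∀ z ∈ T, θ < z := by
        intro z hz
        by_contra h'
        exact hcase ⟨z, Finset.mem_filter.mpr ⟨hz, by simpa using not_lt.mp h'⟩⟩
      have hzero : ∀ (x : ℝ), x ∈ T → ∀ (yy : ℝ), yy ∈ T → SQ α θ x yy = 0 := by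
        intro x hx yy hy
        unfold SQ
        rw [if_pos (hall x hx), if_pos (hall yy hy)]
        ring
      have h1 : ∀ i : Fin n, SQ α θ (x1 i) (y i) = 0 := fun i =>
        hzero _ (hmemT i).1 _ (hmemT i).2.2
      have h2 : ∀ i : Fin n, SQ α θ (x2 i) (y i) = 0 := fun i =>
        hzero _ (hmemT i).2.1 _ (hmemT i).2.2
      rw [Finset.sum_congr rfl (fun i _ => h1 i), Finset.sum_congr rfl (fun i _ => h2 i)]
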